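/- Euler's number e is irrational. -/

import Mathlib

open Finset in
theorem e_irrational : Irrational (Real.exp 1) := by
  rintro ⟨q, hq⟩
  set n : ℕ := q.den + 1 with hn
  have hn2 : 2 ≤ n := by have := q.pos; omega
  have hnpos : 0 < n := by omega
  set s : ℝ := ∑ m ∈ range (n + 1), 1 / m.factorial with hs
  -- upper bound: e - s ≤ 1/(n! * n)
  have hbound := Real.exp_bound (x := 1) (by norm_num) hnpos
  simp only [one_pow, abs_one, one_mul] at hbound
  have hsplit : s = (∑ m ∈ range n, (1:ℝ) / m.factorial) + 1 / n.factorial := by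
    rw [hs, Finset.sum_range_succ]
  have hub : Real.exp 1 - s ≤ 1 / (n.factorial * n) := by
    have h1 := (abs_sub_le_iff.1 hbound).1
    rw [hsplit]
    have hfn : (0:ℝ) < n.factorial := by positivity
    have hnn : (0:ℝ) < n := by positivity
    have : (n.succ : ℝ) / (n.factorial * n) - 1 / n.factorial = 1 / (n.factorial * n) := by
      field_simp
      push_cast; ring
    nlinarith [h1]
  -- lower bound: s < e
  have hlb : s < Real.exp 1 := by
    have h2 := Real.sum_le_exp_of_nonneg (x := 1) (by norm_num) (n + 2)
    have : s + 1 / (n+1).factorial ≤ Real.exp 1 := by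
      have : (∑ i ∈ range (n + 2), (1:ℝ) ^ i / i.factorial)
          = s + 1 / (n+1).factorial := by
        rw [Finset.sum_range_succ, hs]; simp
      linarith [h2, this.symm.le, this.le]
    have hpos : (0:ℝ) < 1 / (n+1).factorial := by positivity
    linarith
  -- n! * e is an integer
  have hdvd : q.den ∣ n.factorial := Nat.dvd_factorial q.pos (by omega)
  obtain ⟨c, hc⟩ := hdvd
  have hqe : (n.factorial : ℝ) * Real.exp 1 = ((q.num * c : ℤ) : ℝ) := by
    rw [← hq]
    have hq' : (q : ℝ) = (q.num : ℝ) / (q.den : ℝ) := by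
      rw [Rat.cast_def]
    rw [hq', hc]
    have : (q.den : ℝ) ≠ 0 := by exact_mod_cast q.den_nz
    push_cast
    field_simp
  -- n! * s is an integer
  have hqs : (n.factorial : ℝ) * s = ((∑ m ∈ range (n + 1), n.factorial / m.factorial : ℕ) : ℝ) := by
    rw [hs, Finset.mul_sum]
    push_cast
    refine Finset.sum_congr rfl fun m hm => ?_
    have hm' : m ≤ n := by simpa using Nat.lt_succ_iff.mp (Finset.mem_range.mp hm)
    have hdvd' : m.factorial ∣ n.factorial := Nat.factorial_dvd_factorial hm'
    rw [Nat.cast_div hdvd' (by exact_mod_cast m.factorial_ne_zero)]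
    ring
  -- combine
  set z : ℤ := q.num * c - (∑ m ∈ range (n + 1), n.factorial / m.factorial : ℕ) with hz
  have hze : (z : ℝ) = (n.factorial : ℝ) * (Real.exp 1 - s) := by
    rw [hz, Int.cast_sub, Int.cast_natCast, ← hqs, ← hqe]
    ring
  have hfn : (0:ℝ) < n.factorial := by positivity
  have h0 : (0:ℝ) < z := by rw [hze]; nlinarith
  have h1 : (z:ℝ) < 1 := by
    rw [hze]
    have : (n.factorial : ℝ) * (Real.exp 1 - s) ≤ 1 / n := by
      rw [div_mul_eq_div_div] at hub
      calc (n.factorial : ℝ) * (Real.exp 1 - s) ≤ (n.factorial : ℝ) * (1 / n.factorial / n) := by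
            nlinarith
        _ = 1 / n := by field_simp
    have hn1 : (1:ℝ) / n < 1 := by
      rw [div_lt_one (by positivity)]
      exact_mod_cast hn2.trans_lt' one_lt_two
    linarith
  have : (0:ℤ) < z := by exact_mod_cast h0
  have : z < 1 := by exact_mod_cast h1
  omega
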